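/- Let p ∈ (0,1), q < 0, and p' = p/(p-1). Let X be a metric space with a σ-finite Borel measure μ, fix a ∈ X, and let u, v : X → (0,∞) be measurable and locally integrable. If there is a constant C > 0 such that (∫_X (∫_{X∖B(a,d(x,a))} f dμ)^q u(x) dμ(x))^{1/q} ≥ C (∫_X f(x)^p v(x) dμ(x))^{1/p} for every measurable f : X → [0,∞], then for every x ≠ a one has (∫_{B(a,d(x,a))} u dμ)^{1/q} · (∫_{X∖B(a,d(x,a))} v^{1-p'} dμ)^{1/p'} ≥ C; in particular D₂ := inf_{x ≠ a} of this quantity satisfies D₂ ≥ C > 0. -/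

import Mathlib

open MeasureTheory ENNReal Set

private lemma rpow_anti {x y : ℝ≥0∞} {z : ℝ} (hz : z ≤ 0) (hxy : x ≤ y) :
    y ^ z ≤ x ^ z := by
  rw [← neg_neg z, ENNReal.rpow_neg x, ENNReal.rpow_neg y]
  exact ENNReal.inv_le_inv.2 (ENNReal.rpow_le_rpow hxy (neg_nonneg.2 hz))

private lemma ennreal_div_step {Wn U C : ℝ≥0∞} {p q : ℝ} (hp0 : 0 < p) (hq : q < 0)
    (hW0 : Wn ≠ 0) (hWt : Wn ≠ ⊤) (hU0 : U ≠ 0) (hUt : U ≠ ⊤)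
    (h : C * Wn ^ (1 / p) ≤ (Wn ^ q * U) ^ (1 / q)) :
    C ≤ Wn ^ (1 - 1 / p) * U ^ (1 / q) := by
  have hq0 : q ≠ 0 := hq.ne
  have hWqt : Wn ^ q ≠ ⊤ := by
    simp [ENNReal.rpow_eq_top_iff, hW0, hWt]
  have key : (Wn ^ q * U) ^ (1 / q) = Wn * U ^ (1 / q) := by
    rw [ENNReal.mul_rpow_of_ne_top hWqt hUt, ← ENNReal.rpow_mul,
      mul_one_div_cancel hq0, ENNReal.rpow_one]
  rw [key] at h
  have hb0 : Wn ^ (1 / p) ≠ 0 := by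
    simp [ENNReal.rpow_eq_zero_iff, hW0, hWt]
  have hbt : Wn ^ (1 / p) ≠ ⊤ := by
    simp [ENNReal.rpow_eq_top_iff, hW0, hWt]
  have hle : C ≤ (Wn * U ^ (1 / q)) / Wn ^ (1 / p) :=
    (ENNReal.le_div_iff_mul_le (Or.inl hb0) (Or.inl hbt)).2 h
  refine hle.trans (le_of_eq ?_)
  have hWsplit : Wn = Wn ^ (1 - 1 / p) * Wn ^ (1 / p) := by
    rw [← ENNReal.rpow_add _ _ hW0 hWt, sub_add_cancel, ENNReal.rpow_one]
  calc (Wn * U ^ (1 / q)) / Wn ^ (1 / p)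
      = (Wn ^ (1 - 1 / p) * Wn ^ (1 / p) * U ^ (1 / q)) * (Wn ^ (1 / p))⁻¹ := by
        rw [← hWsplit, div_eq_mul_inv]
    _ = Wn ^ (1 - 1 / p) * U ^ (1 / q) * (Wn ^ (1 / p) * (Wn ^ (1 / p))⁻¹) := by ring
    _ = Wn ^ (1 - 1 / p) * U ^ (1 / q) := by
        rw [ENNReal.mul_inv_cancel hb0 hbt, mul_one]

private lemma test_bound {X : Type*} [MetricSpace X] [MeasurableSpace X] [BorelSpace X]
    (μ : Measure X) (a : X) {p q s : ℝ} (hp0 : 0 < p) (hq : q < 0)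
    (hs : s * p + 1 = s)
    {u v : X → ℝ≥0∞} (hu : Measurable u) (hv : Measurable v)
    (hv_pos : ∀ x, 0 < v x) (hv_lt : ∀ x, v x < ∞)
    {C : ℝ≥0∞}
    (hineq : ∀ f : X → ℝ≥0∞, Measurable f →
      (∫⁻ x, (∫⁻ y in (Metric.ball a (dist x a))ᶜ, f y ∂μ) ^ q * u x ∂μ) ^ (1 / q) ≥
        C * (∫⁻ x, (f x) ^ p * v x ∂μ) ^ (1 / p))
    {S : Set X} (hS : MeasurableSet S) (B' : Set X) :
    C * (∫⁻ y in S, v y ^ s ∂μ) ^ (1 / p) ≤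
      ((∫⁻ y in S, v y ^ s ∂μ) ^ q * ∫⁻ y in B', u y ∂μ) ^ (1 / q) := by
  set g : X → ℝ≥0∞ := fun y => v y ^ s with hg
  have hgm : Measurable g := hv.pow measurable_const
  have hfm : Measurable (S.indicator g) := hgm.indicator hS
  set W := ∫⁻ y in S, g y ∂μ with hWdef
  have hfp : ∀ x, (S.indicator g x) ^ p * v x = S.indicator g x := by
    intro x
    by_cases hx : x ∈ S
    · rw [indicator_of_mem hx, hg]
      calc (v x ^ s) ^ p * v x = v x ^ (s * p) * v x ^ (1 : ℝ) := by
            rw [← ENNReal.rpow_mul, ENNReal.rpow_one]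
        _ = v x ^ (s * p + 1) :=
            (ENNReal.rpow_add _ _ (hv_pos x).ne' (hv_lt x).ne).symm
        _ = v x ^ s := by rw [hs]
    · rw [indicator_of_notMem hx, ENNReal.zero_rpow_of_pos hp0, zero_mul]
  have h1 : ∫⁻ x, (S.indicator g x) ^ p * v x ∂μ = W := by
    simp_rw [hfp]
    rw [lintegral_indicator hS]
  have h2 : ∀ x : X, (∫⁻ y in (Metric.ball a (dist x a))ᶜ, S.indicator g y ∂μ) ≤ W := by
    intro x
    calc (∫⁻ y in (Metric.ball a (dist x a))ᶜ, S.indicator g y ∂μ)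
        ≤ ∫⁻ y, S.indicator g y ∂μ := lintegral_mono' Measure.restrict_le_self le_rfl
      _ = W := lintegral_indicator hS g
  have h3 : W ^ q * (∫⁻ y in B', u y ∂μ) ≤
      ∫⁻ x, (∫⁻ y in (Metric.ball a (dist x a))ᶜ, S.indicator g y ∂μ) ^ q * u x ∂μ := by
    rw [← lintegral_const_mul _ hu]
    calc (∫⁻ x in B', W ^ q * u x ∂μ)
        ≤ ∫⁻ x in B', (∫⁻ y in (Metric.ball a (dist x a))ᶜ, S.indicator g y ∂μ) ^ q * u x ∂μ :=
          lintegral_mono fun x => mul_le_mul_left (rpow_anti hq.le (h2 x)) (u x)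
      _ ≤ ∫⁻ x, (∫⁻ y in (Metric.ball a (dist x a))ᶜ, S.indicator g y ∂μ) ^ q * u x ∂μ :=
          lintegral_mono' Measure.restrict_le_self le_rfl
  calc C * W ^ (1 / p)
      = C * (∫⁻ x, (S.indicator g x) ^ p * v x ∂μ) ^ (1 / p) := by rw [h1]
    _ ≤ (∫⁻ x, (∫⁻ y in (Metric.ball a (dist x a))ᶜ, S.indicator g y ∂μ) ^ q * u x ∂μ) ^ (1 / q) :=
        hineq _ hfm
    _ ≤ (W ^ q * ∫⁻ y in B', u y ∂μ) ^ (1 / q) :=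
        rpow_anti (one_div_neg.2 hq).le h3

private lemma fin_lemma {X : Type*} [MetricSpace X] [MeasurableSpace X] [BorelSpace X]
    (μ : Measure X) [SigmaFinite μ] (a : X) {p q s : ℝ}
    (hp0 : 0 < p) (hp1 : p < 1) (hq : q < 0) (hs : s * p + 1 = s)
    {u v : X → ℝ≥0∞} (hu : Measurable u) (hv : Measurable v)
    (hu_pos : ∀ x, 0 < u x)
    (hv_pos : ∀ x, 0 < v x) (hv_lt : ∀ x, v x < ∞)
    {C : ℝ≥0∞} (hC_pos : 0 < C)
    (hineq : ∀ f : X → ℝ≥0∞, Measurable f →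
      (∫⁻ x, (∫⁻ y in (Metric.ball a (dist x a))ᶜ, f y ∂μ) ^ q * u x ∂μ) ^ (1 / q) ≥
        C * (∫⁻ x, (f x) ^ p * v x ∂μ) ^ (1 / p)) :
    ∫⁻ y, v y ^ s ∂μ ≠ ⊤ := by
  intro htop
  set g : X → ℝ≥0∞ := fun y => v y ^ s with hg
  have hgm : Measurable g := hv.pow measurable_const
  have hgtop : ∀ y, g y ≠ ⊤ := by
    intro y
    simp [hg, ENNReal.rpow_eq_top_iff, (hv_pos y).ne', (hv_lt y).ne]
  have hg0 : ∀ y, g y ≠ 0 := by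
    intro y
    simp [hg, ENNReal.rpow_eq_zero_iff, (hv_pos y).ne', (hv_lt y).ne]
  set ν : Measure X := μ.withDensity g with hν
  set S : ℕ → Set X := fun n => spanningSets μ n ∩ {y | g y ≤ n} with hSdef
  have hSm : ∀ n, MeasurableSet (S n) := fun n =>
    (measurableSet_spanningSets μ n).inter (hgm measurableSet_Iic)
  have hmono : Monotone S := by
    intro m n hmn
    exact inter_subset_inter (monotone_spanningSets μ hmn)
      (fun y hy => le_trans hy (show ((m:ℕ):ℝ≥0∞) ≤ ((n:ℕ):ℝ≥0∞) by exact_mod_cast hmn))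
  have hUnion : ⋃ n, S n = univ := by
    ext y
    simp only [mem_iUnion, mem_univ, iff_true]
    obtain ⟨m, hm⟩ : ∃ m, y ∈ spanningSets μ m := by
      have h := iUnion_spanningSets μ
      have : y ∈ ⋃ n, spanningSets μ n := h ▸ mem_univ y
      exact mem_iUnion.1 this
    obtain ⟨k, hk⟩ := ENNReal.exists_nat_gt (hgtop y)
    refine ⟨max m k, monotone_spanningSets μ (le_max_left _ _) hm, ?_⟩
    exact le_trans hk.le
      (show ((k:ℕ):ℝ≥0∞) ≤ ((max m k : ℕ):ℝ≥0∞) by exact_mod_cast le_max_right m k)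
  have hνS : ∀ n, ν (S n) = ∫⁻ y in S n, g y ∂μ := fun n => withDensity_apply g (hSm n)
  have hfin : ∀ n, ν (S n) ≠ ⊤ := by
    intro n
    rw [hνS n]
    have h1 : (∫⁻ y in S n, g y ∂μ) ≤ (n : ℝ≥0∞) * μ (spanningSets μ n) := by
      calc (∫⁻ y in S n, g y ∂μ) ≤ ∫⁻ _ in S n, (n : ℝ≥0∞) ∂μ :=
            setLIntegral_mono' (hSm n) (fun y hy => hy.2)
        _ = (n : ℝ≥0∞) * μ (S n) := setLIntegral_const _ _
        _ ≤ (n : ℝ≥0∞) * μ (spanningSets μ n) :=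
            mul_le_mul_right (measure_mono inter_subset_left) _
    exact (h1.trans_lt (ENNReal.mul_lt_top (by simp) (measure_spanningSets_lt_top μ n))).ne
  have hsup : ⨆ n, ν (S n) = ⊤ := by
    have hd : Directed (· ⊆ ·) S := hmono.directed_le
    rw [← hd.measure_iUnion, hUnion]
    have huniv : ν univ = ∫⁻ y, g y ∂μ := by
      rw [hν, withDensity_apply g MeasurableSet.univ, Measure.restrict_univ]
    rw [huniv]
    exact htop
  -- key inequality for each n
  set UX := ∫⁻ y, u y ∂μ with hUXdef
  have hKn : ∀ n, C * (∫⁻ y in S n, g y ∂μ) ^ (1 / p) ≤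
      ((∫⁻ y in S n, g y ∂μ) ^ q * UX) ^ (1 / q) := by
    intro n
    have := test_bound μ a hp0 hq hs hu hv hv_pos hv_lt hineq (hSm n) univ
    rwa [Measure.restrict_univ] at this
  rcases eq_or_ne UX 0 with h0 | h0
  · -- then μ = 0, contradicting htop
    have hae : u =ᵐ[μ] 0 := (lintegral_eq_zero_iff hu).1 h0
    have hμ0 : μ univ = 0 := by
      have := hae
      rw [Filter.EventuallyEq, ae_iff] at this
      have huniv : {x | ¬ u x = (0 : X → ℝ≥0∞) x} = univ := by
        ext y; simp [(hu_pos y).ne']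
      rwa [huniv] at this
    have : μ = 0 := Measure.measure_univ_eq_zero.1 hμ0
    rw [this] at htop
    simp at htop
  · have hq0 : (1 : ℝ) / q < 0 := one_div_neg.2 hq
    have hWq_ne_zero : ∀ n, ((∫⁻ y in S n, g y ∂μ) : ℝ≥0∞) ^ q ≠ 0 := by
      intro n
      have hWt : (∫⁻ y in S n, g y ∂μ) ≠ ⊤ := by rw [← hνS]; exact hfin n
      simp [ENNReal.rpow_eq_zero_iff, hWt, not_lt.2 hq.le]
    rcases eq_or_ne UX ⊤ with htopU | hUt
    · -- pick n with positive mass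
      obtain ⟨n, hn⟩ : ∃ n, (0 : ℝ≥0∞) < ν (S n) := by
        have : (0 : ℝ≥0∞) < ⨆ n, ν (S n) := by rw [hsup]; exact ENNReal.zero_lt_top
        exact lt_iSup_iff.1 this
      have h := hKn n
      rw [htopU, ENNReal.mul_top (hWq_ne_zero n), ENNReal.top_rpow_of_neg hq0] at h
      have hW0 : (∫⁻ y in S n, g y ∂μ) ≠ 0 := by rw [← hνS]; exact hn.ne'
      have : C * (∫⁻ y in S n, g y ∂μ) ^ (1 / p) ≠ 0 := by
        apply mul_ne_zero hC_pos.ne'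
        simp [ENNReal.rpow_eq_zero_iff, hW0, hp0.le, not_lt.2 hq0.le, not_lt.2 (one_div_pos.2 hp0).le]
      exact this (le_antisymm h zero_le)
    · have hUX_pos : (0 : ℝ≥0∞) < UX := pos_iff_ne_zero.2 h0
      have hUq_pos : (0 : ℝ≥0∞) < UX ^ (1 / q) := ENNReal.rpow_pos hUX_pos hUt
      have hUq_top : UX ^ (1 / q) ≠ ⊤ := by
        simp [ENNReal.rpow_eq_top_iff, h0, hUt]
      rcases eq_or_ne C ⊤ with hCt | hCt
      · obtain ⟨n, hn⟩ : ∃ n, (0 : ℝ≥0∞) < ν (S n) := by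
          have : (0 : ℝ≥0∞) < ⨆ n, ν (S n) := by rw [hsup]; exact ENNReal.zero_lt_top
          exact lt_iSup_iff.1 this
        have h := hKn n
        have hW0 : (∫⁻ y in S n, g y ∂μ) ≠ 0 := by rw [← hνS]; exact hn.ne'
        have hlhs : C * (∫⁻ y in S n, g y ∂μ) ^ (1 / p) = ⊤ := by
          rw [hCt]
          apply ENNReal.top_mul
          simp [ENNReal.rpow_eq_zero_iff, hW0, hp0.le, not_lt.2 hq0.le, not_lt.2 (one_div_pos.2 hp0).le]
        have hrhs : ((∫⁻ y in S n, g y ∂μ) ^ q * UX) ^ (1 / q) ≠ ⊤ := by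
          have hbase : (∫⁻ y in S n, g y ∂μ) ^ q * UX ≠ 0 :=
            mul_ne_zero (hWq_ne_zero n) h0
          simp [ENNReal.rpow_eq_top_iff, hbase, hq.le, not_lt.2 hq0.le]
        rw [hlhs] at h
        exact hrhs (top_le_iff.1 h)
      · -- C finite and positive, UX positive finite: derive contradiction
        set δ := C * (UX ^ (1 / q))⁻¹ with hδ
        have hδ0 : δ ≠ 0 := mul_ne_zero hC_pos.ne' (ENNReal.inv_ne_zero.2 hUq_top)
        have hδt : δ ≠ ⊤ := ENNReal.mul_ne_top hCt (ENNReal.inv_ne_top.2 hUq_pos.ne')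
        set t : ℝ := 1 - 1 / p with ht
        have ht_neg : t < 0 := by
          have h1 : (1 : ℝ) < 1 / p := by
            rw [lt_div_iff₀ hp0]; linarith
          simp only [ht]; linarith
        have hhalf0 : δ / 2 ≠ 0 := by
          simp [ENNReal.div_eq_top, hδ0, ENNReal.div_eq_zero_iff, hδt]
        have hhalft : δ / 2 ≠ ⊤ := by
          simp [ENNReal.div_eq_top, hδt]
        set M := (δ / 2) ^ t⁻¹ with hM
        have hM0 : M ≠ 0 := by
          simp [hM, ENNReal.rpow_eq_zero_iff, hhalf0, hhalft]
        have hMt : M ≠ ⊤ := by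
          simp [hM, ENNReal.rpow_eq_top_iff, hhalf0, hhalft]
        obtain ⟨n, hn⟩ : ∃ n, M < ν (S n) := by
          have : M < ⨆ n, ν (S n) := by rw [hsup]; exact hMt.lt_top
          exact lt_iSup_iff.1 this
        set Wn := ∫⁻ y in S n, g y ∂μ with hWn
        have hWn_eq : ν (S n) = Wn := hνS n
        have hW0 : Wn ≠ 0 := by
          rw [← hWn_eq]
          exact (lt_of_le_of_lt (zero_le : (0 : ℝ≥0∞) ≤ M) hn).ne'
        have hWt : Wn ≠ ⊤ := by rw [← hWn_eq]; exact hfin n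
        have hstep : C ≤ Wn ^ t * UX ^ (1 / q) :=
          ennreal_div_step hp0 hq hW0 hWt h0 hUt (hKn n)
        have hWnt_le : Wn ^ t ≤ δ / 2 := by
          have h1 : Wn ^ t ≤ M ^ t := rpow_anti ht_neg.le (by rw [← hWn_eq]; exact hn.le)
          have h2 : M ^ t = δ / 2 := by
            rw [hM, ← ENNReal.rpow_mul, inv_mul_cancel₀ ht_neg.ne, ENNReal.rpow_one]
          rwa [h2] at h1
        have hlt : C < C := by
          calc C ≤ Wn ^ t * UX ^ (1 / q) := hstep
            _ ≤ (δ / 2) * UX ^ (1 / q) := mul_le_mul_left hWnt_le _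
            _ < δ * UX ^ (1 / q) := by
                rw [mul_comm (δ / 2), mul_comm δ]; refine ENNReal.mul_lt_mul_right hUq_pos.ne' hUq_top ?_
                exact ENNReal.half_lt_self hδ0 hδt
            _ = C := by
                rw [hδ, mul_assoc, ENNReal.inv_mul_cancel hUq_pos.ne' hUq_top, mul_one]
        exact lt_irrefl _ hlt

/-- Necessity of the condition `D₂ > 0` for the conjugate reverse integral Hardy
inequality on a metric measure space: any admissible constant `C` is a lower bound
for the quantity defining `D₂`, so `D₂ ≥ C > 0`. -/
theorem conjugate_reverse_integral_hardy_necessity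
    {X : Type*} [MetricSpace X] [MeasurableSpace X] [BorelSpace X]
    (μ : Measure X) [SigmaFinite μ] (a : X)
    (p q p' : ℝ) (hp : p ∈ Set.Ioo (0:ℝ) 1) (hq : q < 0) (hp' : p' = p / (p - 1))
    (u v : X → ℝ≥0∞) (hu : Measurable u) (hv : Measurable v)
    (hu_pos : ∀ x, 0 < u x) (hu_lt : ∀ x, u x < ∞)
    (hv_pos : ∀ x, 0 < v x) (hv_lt : ∀ x, v x < ∞)
    (hu_loc : ∀ K : Set X, IsCompact K → ∫⁻ x in K, u x ∂μ < ∞)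
    (hv_loc : ∀ K : Set X, IsCompact K → ∫⁻ x in K, v x ∂μ < ∞)
    (C : ℝ≥0∞) (hC_pos : 0 < C)
    (hineq : ∀ f : X → ℝ≥0∞, Measurable f →
      (∫⁻ x, (∫⁻ y in (Metric.ball a (dist x a))ᶜ, f y ∂μ) ^ q * u x ∂μ) ^ (1 / q) ≥
        C * (∫⁻ x, (f x) ^ p * v x ∂μ) ^ (1 / p)) :
    (∀ x : X, x ≠ a →
      (∫⁻ y in Metric.ball a (dist x a), u y ∂μ) ^ (1 / q) *
        (∫⁻ y in (Metric.ball a (dist x a))ᶜ, (v y) ^ (1 - p') ∂μ) ^ (1 / p') ≥ C) ∧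
    (⨅ (x : X) (_ : x ≠ a),
      (∫⁻ y in Metric.ball a (dist x a), u y ∂μ) ^ (1 / q) *
        (∫⁻ y in (Metric.ball a (dist x a))ᶜ, (v y) ^ (1 - p') ∂μ) ^ (1 / p')) ≥ C := by
  obtain ⟨hp0, hp1⟩ := hp
  have hpm1 : p - 1 < 0 := by linarith
  have hpne : p - 1 ≠ 0 := hpm1.ne
  have hp'neg : p' < 0 := by rw [hp']; exact div_neg_of_pos_of_neg hp0 hpm1
  have hs : (1 - p') * p + 1 = 1 - p' := by
    rw [hp']; field_simp; ring
  have h1p' : 1 / p' = 1 - 1 / p := by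
    rw [hp', one_div_div]; field_simp
  have h1p'neg : 1 / p' < 0 := one_div_neg.2 hp'neg
  have h1qneg : 1 / q < 0 := one_div_neg.2 hq
  -- global finiteness of the weight integral
  have hWX : ∫⁻ y, v y ^ (1 - p') ∂μ ≠ ⊤ :=
    fin_lemma μ a hp0 hp1 hq hs hu hv hu_pos hv_pos hv_lt hC_pos hineq
  -- main pointwise claim
  have Hx : ∀ x : X, x ≠ a →
      (∫⁻ y in Metric.ball a (dist x a), u y ∂μ) ^ (1 / q) *
        (∫⁻ y in (Metric.ball a (dist x a))ᶜ, (v y) ^ (1 - p') ∂μ) ^ (1 / p') ≥ C := by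
    intro x _
    set B := Metric.ball a (dist x a) with hB
    have hBm : MeasurableSet B := Metric.isOpen_ball.measurableSet
    set W := ∫⁻ y in Bᶜ, v y ^ (1 - p') ∂μ with hWdef
    set U := ∫⁻ y in B, u y ∂μ with hUdef
    have hWt : W ≠ ⊤ := by
      refine ne_top_of_le_ne_top hWX ?_
      exact lintegral_mono' Measure.restrict_le_self le_rfl
    -- global claim : U ≠ ⊤
    have hUt : U ≠ ⊤ := by
      intro hU
      have hUX : (∫⁻ y, u y ∂μ) = ⊤ := by
        have hle : U ≤ ∫⁻ y, u y ∂μ := lintegral_mono' Measure.restrict_le_self le_rfl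
        exact top_le_iff.1 (hU ▸ hle)
      -- the measure is nonzero
      have hWX0 : (∫⁻ y, v y ^ (1 - p') ∂μ) ≠ 0 := by
        intro h0
        have hgm : Measurable (fun y => v y ^ (1 - p')) := hv.pow measurable_const
        have hae : (fun y => v y ^ (1 - p')) =ᵐ[μ] 0 := (lintegral_eq_zero_iff hgm).1 h0
        have hμ0 : μ univ = 0 := by
          rw [Filter.EventuallyEq, ae_iff] at hae
          have huniv : {y | ¬ (fun y => v y ^ (1 - p')) y = (0 : X → ℝ≥0∞) y} = univ := by
            ext y
            simp [ENNReal.rpow_eq_zero_iff, (hv_pos y).ne', (hv_lt y).ne]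
          rwa [huniv] at hae
        have hμz : μ = 0 := Measure.measure_univ_eq_zero.1 hμ0
        rw [hμz] at hUdef
        simp only [Measure.restrict_zero, lintegral_zero_measure] at hUdef
        rw [hUdef] at hU
        exact absurd hU (by simp)
      have hkey := test_bound μ a hp0 hq hs hu hv hv_pos hv_lt hineq MeasurableSet.univ univ
      rw [Measure.restrict_univ] at hkey
      rw [hUX] at hkey
      have hWXq0 : (∫⁻ y, v y ^ (1 - p') ∂μ) ^ q ≠ 0 := by
        simp [ENNReal.rpow_eq_zero_iff, hWX, not_lt.2 hq.le]
      rw [ENNReal.mul_top hWXq0, ENNReal.top_rpow_of_neg h1qneg] at hkey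
      have hne : C * (∫⁻ y, v y ^ (1 - p') ∂μ) ^ (1 / p) ≠ 0 := by
        apply mul_ne_zero hC_pos.ne'
        simp [ENNReal.rpow_eq_zero_iff, hWX0, hWX, hp0.le, not_lt.2 h1qneg.le,
          not_lt.2 (one_div_pos.2 hp0).le]
      exact hne (le_antisymm hkey zero_le)
    by_cases hW0 : W = 0
    · rw [ge_iff_le, hW0, ENNReal.zero_rpow_of_neg h1p'neg]
      have hUq0 : U ^ (1 / q) ≠ 0 := by
        simp [ENNReal.rpow_eq_zero_iff, hUt, hq.le, not_lt.2 h1qneg.le]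
      rw [ENNReal.mul_top hUq0]
      exact le_top
    · have hK : C * W ^ (1 / p) ≤ (W ^ q * U) ^ (1 / q) :=
        test_bound μ a hp0 hq hs hu hv hv_pos hv_lt hineq hBm.compl B
      by_cases hU0 : U = 0
      · rw [ge_iff_le, hU0, ENNReal.zero_rpow_of_neg h1qneg]
        have hWp0 : W ^ (1 / p') ≠ 0 := by
          simp [ENNReal.rpow_eq_zero_iff, hW0, hWt]
        rw [ENNReal.top_mul hWp0]
        exact le_top
      · have hstep : C ≤ W ^ (1 - 1 / p) * U ^ (1 / q) :=
          ennreal_div_step hp0 hq hW0 hWt hU0 hUt hK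
        rw [ge_iff_le, h1p', mul_comm]
        exact hstep
  exact ⟨Hx, le_iInf fun x => le_iInf fun hx => Hx x hx⟩
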